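/- In a brace on six or more vertices, every edge is removable. -/

import Mathlib

open Classical in
/-- A finite multigraph: loops are forbidden, multiple edges are allowed. -/
structure Multigraph where
  V : Type
  E : Type
  [fintV : Fintype V]
  [fintE : Fintype E]
  ends : E → Sym2 V
  no_loops : ∀ e, ¬ (ends e).IsDiag

attribute [instance] Multigraph.fintV Multigraph.fintE

namespace Multigraph

variable (G : Multigraph)

/-- Vertex `v` is incident with edge `e`. -/
def Inc (v : G.V) (e : G.E) : Prop := v ∈ G.ends e

/-- Adjacency of vertices. -/
def Adj (u v : G.V) : Prop := u ≠ v ∧ ∃ e, G.ends e = s(u, v)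

/-- A multigraph is connected. -/
def Connected : Prop := Nonempty G.V ∧ ∀ u v : G.V, Relation.ReflTransGen G.Adj u v

/-- A set of edges is a perfect matching: every vertex is covered exactly once. -/
def IsPerfectMatching (M : Set G.E) : Prop :=
  ∀ v : G.V, ∃! e, e ∈ M ∧ G.Inc v e

/-- Matching covered: nontrivial, connected, every edge lies in a perfect matching. -/
def MatchingCovered : Prop :=
  2 ≤ Nat.card G.V ∧ G.Connected ∧ ∀ e : G.E, ∃ M, G.IsPerfectMatching M ∧ e ∈ M

/-- Degree of a vertex. -/
noncomputable def degree (v : G.V) : ℕ := Nat.card {e : G.E // G.Inc v e}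

/-- Maximum degree `Δ(G)`. -/
noncomputable def maxDegree : ℕ := Finset.univ.sup G.degree

/-- The graph obtained by deleting the edge `e`. -/
noncomputable def deleteEdge (e : G.E) : Multigraph where
  V := G.V
  E := {f : G.E // f ≠ e}
  fintE := Fintype.ofFinite _
  ends f := G.ends f.1
  no_loops f := G.no_loops f.1

/-- An edge of `G` is removable if `G - e` is matching covered. -/
noncomputable def Removable (e : G.E) : Prop := (G.deleteEdge e).MatchingCovered

/-- The graph obtained by deleting a set of vertices (and all incident edges). -/
noncomputable def deleteVerts (S : Set G.V) : Multigraph where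
  V := {v : G.V // v ∉ S}
  E := {e : G.E // ∀ v ∈ G.ends e, v ∉ S}
  fintV := Fintype.ofFinite _
  fintE := Fintype.ofFinite _
  ends e := (G.ends e.1).attachWith e.2
  no_loops e h := G.no_loops e.1 (by
    have := (Sym2.isDiag_map Subtype.val_injective).mpr h
    simpa using this)

/-- Two-connectedness: at least three vertices, and deleting any vertex
leaves a connected graph. -/
noncomputable def TwoConnected : Prop :=
  3 ≤ Nat.card G.V ∧ ∀ v : G.V, (G.deleteVerts {v}).Connected

/-- Three-connectedness: at least four vertices, and deleting any two distinct
vertices leaves a connected graph. -/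
noncomputable def ThreeConnected : Prop :=
  4 ≤ Nat.card G.V ∧ ∀ u v : G.V, u ≠ v → (G.deleteVerts {u, v}).Connected

/-- The cut `∂(X)`: edges with exactly one end in `X`. -/
def cut (X : Set G.V) : Set G.E :=
  {e | ∃ u ∈ X, ∃ w ∈ Xᶜ, G.ends e = s(u, w)}

/-- A tight cut: a cut (with both shores nonempty) met by every perfect matching
in exactly one edge. -/
def IsTightCut (X : Set G.V) : Prop :=
  X.Nonempty ∧ Xᶜ.Nonempty ∧
    ∀ M : Set G.E, G.IsPerfectMatching M → ∃! e, e ∈ M ∧ e ∈ G.cut X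

/-- A cut `∂(X)` is trivial if one of its shores is a singleton. -/
def TrivialShore (X : Set G.V) : Prop := (∃ v, X = {v}) ∨ (∃ v, Xᶜ = {v})

/-- `G` is bipartite. -/
def Bipartite : Prop :=
  ∃ c : G.V → Bool, ∀ (e : G.E) (a b : G.V), G.ends e = s(a, b) → c a ≠ c b

/-- The subgraph of `G` induced by `X` is bipartite. -/
def BipartiteOn (X : Set G.V) : Prop :=
  ∃ c : G.V → Bool, ∀ (e : G.E) (a b : G.V),
    G.ends e = s(a, b) → a ∈ X → b ∈ X → c a ≠ c b

lemma Sym2.exists_eq_mk {α : Type*} (z : Sym2 α) : ∃ a b, z = s(a, b) := by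
  induction z using Sym2.ind with
  | _ x y => exact ⟨x, y, rfl⟩

open Classical in
/-- Contraction `G/X`: the shore `X` is shrunk to a single new vertex.
Edges with both ends in `X` disappear. -/
noncomputable def contract (X : Set G.V) : Multigraph where
  V := {v : G.V // v ∉ X} ⊕ Unit
  E := {e : G.E // ¬ ∀ v ∈ G.ends e, v ∈ X}
  fintV := Fintype.ofFinite _
  fintE := Fintype.ofFinite _
  ends e := (G.ends e.1).map
    (fun v => if h : v ∈ X then Sum.inr () else Sum.inl ⟨v, h⟩)
  no_loops := by
    rintro ⟨e, he⟩ hdiag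
    obtain ⟨a, b, hab⟩ := Sym2.exists_eq_mk (G.ends e)
    have hne : a ≠ b := by
      have := G.no_loops e
      rw [hab, Sym2.mk_isDiag_iff] at this
      exact this
    simp only [hab, Sym2.map_pair_eq, Sym2.mk_isDiag_iff] at hdiag
    by_cases ha : a ∈ X <;> by_cases hb : b ∈ X
    · exact he (by
        rw [hab]; intro v hv
        rcases Sym2.mem_iff.mp hv with h | h <;> subst h <;> assumption)
    · rw [dif_pos ha, dif_neg hb] at hdiag; simp at hdiag
    · rw [dif_neg ha, dif_pos hb] at hdiag; simp at hdiag
    · rw [dif_neg ha, dif_neg hb] at hdiag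
      simp only [Sum.inl.injEq, Subtype.mk.injEq] at hdiag
      exact hne hdiag

/-- A brick: a nonbipartite matching covered graph all of whose tight cuts are
trivial. -/
def IsBrick : Prop :=
  G.MatchingCovered ∧ ¬ G.Bipartite ∧ ∀ X : Set G.V, G.IsTightCut X → G.TrivialShore X

/-- A brace: a bipartite matching covered graph all of whose tight cuts are
trivial. -/
def IsBrace : Prop :=
  G.MatchingCovered ∧ G.Bipartite ∧ ∀ X : Set G.V, G.IsTightCut X → G.TrivialShore X

/-- `BrickCount G n` holds if some tight cut decomposition of `G` produces
exactly `n` bricks.  (By Lovász's theorem the number `n` is independent of the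
decomposition.) -/
inductive BrickCount : (G : Multigraph) → ℕ → Prop
  | brick (G : Multigraph) (h : G.IsBrick) : BrickCount G 1
  | brace (G : Multigraph) (h : G.IsBrace) : BrickCount G 0
  | cut (G : Multigraph) (X : Set G.V) (ht : G.IsTightCut X) (hnt : ¬ G.TrivialShore X)
      {n m : ℕ} (h1 : BrickCount (G.contract X) n) (h2 : BrickCount (G.contract Xᶜ) m) :
      BrickCount G (n + m)

/-- A near-brick: a matching covered graph whose tight cut decompositions
have exactly one brick. -/
def IsNearBrick : Prop := G.MatchingCovered ∧ BrickCount G 1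

/-- A single ear of length at least 3: an odd path of length `k ≥ 3` all of whose
internal vertices have degree two. -/
def HasLongSingleEar : Prop :=
  ∃ (k : ℕ) (v : Fin (k + 1) → G.V) (e : Fin k → G.E),
    Odd k ∧ 3 ≤ k ∧ Function.Injective v ∧ Function.Injective e ∧
    (∀ i : Fin k, G.ends (e i) = s(v i.castSucc, v i.succ)) ∧
    (∀ i : Fin (k + 1), i ≠ 0 → i ≠ Fin.last k → G.degree (v i) = 2)

/-- Irreducible: no single ear of length three or more. -/
def Irreducible : Prop := ¬ G.HasLongSingleEar

/-- Isomorphism of multigraphs. -/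
def IsIso (G H : Multigraph) : Prop :=
  ∃ (φ : G.V ≃ H.V) (ψ : G.E ≃ H.E), ∀ e, H.ends (ψ e) = (G.ends e).map φ

end Multigraph

open Multigraph

/-- The complete graph `K₂`. -/
def K2 : Multigraph where
  V := Fin 2
  E := Unit
  ends _ := s(0, 1)
  no_loops _ := by simp [Sym2.mk_isDiag_iff]

/-- The complete graph `K₄`. -/
noncomputable def K4 : Multigraph where
  V := Fin 4
  E := {p : Sym2 (Fin 4) // ¬ p.IsDiag}
  fintE := Fintype.ofFinite _
  ends p := p.1
  no_loops p := p.2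

/-- The cycle `C₄`. -/
def C4 : Multigraph where
  V := ZMod 4
  E := ZMod 4
  ends i := s(i, i + 1)
  no_loops i := by
    have h : ∀ j : ZMod 4, j ≠ j + 1 := by decide
    simpa [Sym2.mk_isDiag_iff] using h i

/-- `C̄₆`, the complement of the 6-cycle (the triangular prism). -/
noncomputable def C6bar : Multigraph where
  V := ZMod 6
  E := {p : Sym2 (ZMod 6) // ¬ p.IsDiag ∧ ∀ a b : ZMod 6, p = s(a, b) → b ≠ a + 1 ∧ a ≠ b + 1}
  fintE := Fintype.ofFinite _
  ends p := p.1
  no_loops p := p.2.1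

namespace BraceProof
open Multigraph Classical

variable {G : Multigraph}

lemma bool3 : ∀ p q r : Bool, p ≠ q → q ≠ r → p = r := by decide
lemma bool3' : ∀ p q r : Bool, p ≠ q → p ≠ r → q = r := by decide
lemma bool4 : ∀ p q r s : Bool, p ≠ q → r ≠ s → (p = r ∧ q = s) ∨ (p = s ∧ q = r) := by decide


section PM
variable {M : Set G.E} (hM : G.IsPerfectMatching M)

noncomputable def edf (v : G.V) : G.E := (hM v).exists.choose

lemma edf_mem (v : G.V) : edf hM v ∈ M := (hM v).exists.choose_spec.1

lemma edf_inc (v : G.V) : v ∈ G.ends (edf hM v) := (hM v).exists.choose_spec.2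

noncomputable def mf (v : G.V) : G.V := Sym2.Mem.other (edf_inc hM v)

lemma mf_spec (v : G.V) : G.ends (edf hM v) = s(v, mf hM v) :=
  (Sym2.other_spec (edf_inc hM v)).symm

lemma edf_uniq {v : G.V} {g : G.E} (h1 : g ∈ M) (h2 : v ∈ G.ends g) :
    g = edf hM v :=
  (hM v).unique ⟨h1, h2⟩ ⟨edf_mem hM v, edf_inc hM v⟩

lemma mf_ne (v : G.V) : mf hM v ≠ v := by
  intro h
  exact G.no_loops (edf hM v) (by rw [mf_spec hM v, h]; simp)

lemma edf_mf (v : G.V) : edf hM (mf hM v) = edf hM v := by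
  refine (edf_uniq hM (edf_mem hM v) ?_).symm
  rw [mf_spec hM v]; simp

lemma mf_invol (v : G.V) : mf hM (mf hM v) = v := by
  have h := mf_spec hM (mf hM v)
  rw [edf_mf hM v, mf_spec hM v] at h
  rw [Sym2.eq_iff] at h
  rcases h with ⟨h1, _⟩ | ⟨h1, _⟩
  · exact absurd h1.symm (mf_ne hM v)
  · exact h1.symm

lemma mf_inj : Function.Injective (mf hM) := by
  intro a b h
  have := congrArg (mf hM) h
  rwa [mf_invol, mf_invol] at this

lemma mf_eq_of_mem {g : G.E} {a b : G.V} (h1 : g ∈ M) (h2 : G.ends g = s(a, b)) :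
    mf hM a = b := by
  have hg : g = edf hM a := edf_uniq hM h1 (by rw [h2]; simp)
  have h3 := mf_spec hM a
  rw [← hg, h2, Sym2.eq_iff] at h3
  rcases h3 with ⟨_, h⟩ | ⟨h1', h2'⟩
  · exact h.symm
  · exact absurd h1'.symm (mf_ne hM a)

end PM

/-- In a connected graph, any set with nonempty complement that contains a vertex
has a crossing edge. -/
lemma exists_crossing (hconn : G.Connected) {X : Set G.V}
    (hX : X.Nonempty) (hXc : Xᶜ.Nonempty) : ∃ g, g ∈ G.cut X := by
  obtain ⟨a, ha⟩ := hX
  obtain ⟨b, hb⟩ := hXc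
  have key : ∀ x y : G.V, Relation.ReflTransGen G.Adj x y → x ∈ X → y ∉ X →
      ∃ g, g ∈ G.cut X := by
    intro x y h
    induction h with
    | refl => intro h1 h2; exact absurd h1 h2
    | tail hr step ih =>
      rename_i p q
      intro hx hq
      by_cases hp : p ∈ X
      · obtain ⟨hne, g, hg⟩ := step
        exact ⟨g, p, hp, q, hq, hg⟩
      · exact ih hx hp
  exact key a b (hconn.2 a b) ha hb

lemma inc_iff {g : G.E} {a b z : G.V} (h : G.ends g = s(a, b)) :
    G.Inc z g ↔ (z = a ∨ z = b) := by
  unfold Multigraph.Inc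
  rw [h, Sym2.mem_iff]

lemma adj_of_ends {g : G.E} {a b : G.V} (h : G.ends g = s(a, b)) : G.Adj a b :=
  ⟨fun he => G.no_loops g (by rw [h, he]; simp), g, h⟩

lemma adj_symm {a b : G.V} (h : G.Adj a b) : G.Adj b a := by
  obtain ⟨hne, g, hg⟩ := h
  exact ⟨hne.symm, g, hg.trans (Sym2.eq_swap)⟩

section Color
variable {c : G.V → Bool} {M : Set G.E}

lemma adj_color (hc : ∀ (e : G.E) (a b : G.V), G.ends e = s(a, b) → c a ≠ c b)
    {a b : G.V} (h : G.Adj a b) : c a ≠ c b := by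
  obtain ⟨_, g, hg⟩ := h; exact hc g a b hg

lemma mf_color (hc : ∀ (e : G.E) (a b : G.V), G.ends e = s(a, b) → c a ≠ c b)
    (hM : G.IsPerfectMatching M) (v : G.V) : c (mf hM v) ≠ c v :=
  (hc (edf hM v) v (mf hM v) (mf_spec hM v)).symm

open Finset in
lemma color_class_card (hc : ∀ (e : G.E) (a b : G.V), G.ends e = s(a, b) → c a ≠ c b)
    (hM : G.IsPerfectMatching M) (β : Bool) :
    (univ.filter (fun z => c z = β)).card = (univ.filter (fun z => ¬ c z = β)).card := by
  apply Finset.card_bij (fun a _ => mf hM a)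
  · intro a ha
    simp only [mem_filter, mem_univ, true_and] at ha ⊢
    intro h
    exact mf_color hc hM a (h.trans ha.symm)
  · intro a _ b _ h
    exact mf_inj hM h
  · intro b hb
    simp only [mem_filter, mem_univ, true_and] at hb ⊢
    exact ⟨mf hM b, bool3 _ _ _ (mf_color hc hM b) hb, mf_invol hM b⟩

open Finset in
lemma two_mul_color_class (hc : ∀ (e : G.E) (a b : G.V), G.ends e = s(a, b) → c a ≠ c b)
    (hM : G.IsPerfectMatching M) (β : Bool) :
    2 * (univ.filter (fun z => c z = β)).card = Fintype.card G.V := by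
  have h := color_class_card hc hM β
  have h3 : (univ.filter (fun z => c z = β)) ∪ (univ.filter (fun z => ¬ c z = β)) =
      (univ : Finset G.V) := by
    ext z
    by_cases hz : c z = β <;> simp [hz]
  have h4 : Disjoint (univ.filter (fun z => c z = β))
      (univ.filter (fun z => ¬ c z = β)) := by
    rw [Finset.disjoint_left]
    intro a h1 h2
    simp only [Finset.mem_filter] at h1 h2
    exact h2.2 h1.2
  have h5 := congrArg Finset.card h3
  rw [Finset.card_union_of_disjoint h4, Finset.card_univ] at h5
  omega

end Color

open Finset in
lemma key_nbhd (hmc : G.MatchingCovered)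
    (htight : ∀ X : Set G.V, G.IsTightCut X → G.TrivialShore X)
    (c : G.V → Bool) (hc : ∀ (e : G.E) (a b : G.V), G.ends e = s(a, b) → c a ≠ c b)
    {M₀ : Set G.E} (hM₀ : G.IsPerfectMatching M₀)
    (S : Finset G.V) (hS : S.Nonempty) (β : Bool) (hmono : ∀ a ∈ S, c a = β)
    (hsize : 2 * S.card + 3 ≤ Fintype.card G.V) :
    S.card + 2 ≤ (univ.filter (fun b => ∃ a ∈ S, G.Adj a b)).card := by
  classical
  set T := univ.filter (fun b => ∃ a ∈ S, G.Adj a b) with hT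
  have hTcol : ∀ t ∈ T, ¬ c t = β := by
    intro t ht
    rw [hT, mem_filter] at ht
    obtain ⟨a, haS, hadj⟩ := ht.2
    intro h
    exact adj_color hc hadj ((hmono a haS).trans h.symm)
  have hST : Disjoint S T := by
    rw [Finset.disjoint_left]
    intro a haS haT
    exact hTcol _ haT (hmono _ haS)
  have himg : ∀ (Mm : Set G.E) (hMm : G.IsPerfectMatching Mm),
      S.image (mf hMm) ⊆ T := by
    intro Mm hMm t ht
    obtain ⟨a, haS, rfl⟩ := Finset.mem_image.1 ht
    rw [hT, mem_filter]
    exact ⟨mem_univ _, a, haS, (mf_ne hMm a).symm, edf hMm a, mf_spec hMm a⟩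
  have himgcard : ∀ (Mm : Set G.E) (hMm : G.IsPerfectMatching Mm),
      (S.image (mf hMm)).card = S.card :=
    fun Mm hMm => Finset.card_image_of_injective S (mf_inj hMm)
  have hge : S.card ≤ T.card := by
    rw [← himgcard M₀ hM₀]
    exact card_le_card (himg M₀ hM₀)
  by_contra hcon
  push_neg at hcon
  set X : Set G.V := ↑(S ∪ T) with hX
  have hmemX : ∀ z : G.V, z ∈ X ↔ z ∈ S ∪ T := by
    intro z; rw [hX]; exact Finset.mem_coe
  have hXne : X.Nonempty := by
    obtain ⟨a, ha⟩ := hS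
    exact ⟨a, (hmemX a).2 (mem_union_left _ ha)⟩
  have hcard_union : (S ∪ T).card = S.card + T.card := card_union_of_disjoint hST
  have hunion_lt : (S ∪ T).card + 2 ≤ Fintype.card G.V := by omega
  have hXcne : Xᶜ.Nonempty := by
    rw [Set.nonempty_iff_ne_empty]
    intro h
    have h2 : X = Set.univ := by
      rw [← Set.compl_empty, ← h, compl_compl]
    have h3 : (S ∪ T) = Finset.univ := Finset.coe_eq_univ.1 (hX ▸ h2)
    rw [h3, Finset.card_univ] at hcard_union
    omega
  have cross_struct : ∀ (Mm : Set G.E) (hMm : G.IsPerfectMatching Mm) (g : G.E),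
      g ∈ Mm → g ∈ G.cut X → ∃ t, t ∈ T ∧ mf hMm t ∉ S ∧ g = edf hMm t := by
    intro Mm hMm g hgM hgc
    obtain ⟨p, hp, q, hq, hends⟩ := hgc
    have hq' : q ∉ X := hq
    have hmp : mf hMm p = q := mf_eq_of_mem hMm hgM hends
    have hgp : g = edf hMm p := edf_uniq hMm hgM (by rw [hends]; simp)
    rcases mem_union.1 ((hmemX p).1 hp) with hpS | hpT
    · exact absurd ((hmemX q).2 (mem_union_right _ (by
        rw [hT, mem_filter]
        exact ⟨mem_univ _, p, hpS, adj_of_ends hends⟩))) hq'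
    · refine ⟨p, hpT, fun hmpS => hq' ((hmemX q).2 (mem_union_left _ (hmp ▸ hmpS))), hgp⟩
  rcases eq_or_lt_of_le hge with heq | hlt
  · -- T.card = S.card : no PM has a crossing edge, contradiction with connectivity
    have himgeq : ∀ (Mm : Set G.E) (hMm : G.IsPerfectMatching Mm),
        S.image (mf hMm) = T := by
      intro Mm hMm
      apply Finset.eq_of_subset_of_card_le (himg Mm hMm)
      rw [himgcard Mm hMm]
      omega
    obtain ⟨g, hg⟩ := exists_crossing hmc.2.1 hXne hXcne
    obtain ⟨Mm, hMm, hgM⟩ := hmc.2.2 g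
    obtain ⟨t, htT, hmt, -⟩ := cross_struct Mm hMm g hgM hg
    rw [← himgeq Mm hMm] at htT
    obtain ⟨a, haS, rfl⟩ := Finset.mem_image.1 htT
    rw [mf_invol hMm a] at hmt
    exact hmt haS
  · -- T.card = S.card + 1 : X is a nontrivial tight cut, contradiction
    have hTS1 : T.card = S.card + 1 := by omega
    have htc : G.IsTightCut X := by
      refine ⟨hXne, hXcne, ?_⟩
      intro Mm hMm
      have hsd : (T \ S.image (mf hMm)).card = 1 := by
        rw [card_sdiff_of_subset (himg Mm hMm), himgcard Mm hMm, hTS1]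
        omega
      obtain ⟨t0, ht0⟩ := Finset.card_eq_one.1 hsd
      have ht0mem : t0 ∈ T ∧ t0 ∉ S.image (mf hMm) :=
        Finset.mem_sdiff.1 (ht0 ▸ Finset.mem_singleton_self t0)
      have hmt0S : mf hMm t0 ∉ S := by
        intro h
        exact ht0mem.2 (Finset.mem_image.2 ⟨mf hMm t0, h, mf_invol hMm t0⟩)
      have hmt0T : mf hMm t0 ∉ T := by
        intro h
        exact hTcol _ h (bool3 _ _ _ (mf_color hc hMm t0) (hTcol _ ht0mem.1))
      have hmt0X : mf hMm t0 ∈ Xᶜ := by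
        intro h
        rcases mem_union.1 ((hmemX _).1 h) with h' | h'
        · exact hmt0S h'
        · exact hmt0T h'
      refine ⟨edf hMm t0, ⟨edf_mem hMm t0, t0, (hmemX t0).2 (mem_union_right _ ht0mem.1),
        mf hMm t0, hmt0X, mf_spec hMm t0⟩, ?_⟩
      rintro g ⟨hgM, hgc⟩
      obtain ⟨t, htT, hmt, rfl⟩ := cross_struct Mm hMm g hgM hgc
      have : t ∈ T \ S.image (mf hMm) := by
        rw [Finset.mem_sdiff]
        refine ⟨htT, fun h => ?_⟩
        obtain ⟨a, haS, rfl⟩ := Finset.mem_image.1 h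
        rw [mf_invol hMm a] at hmt
        exact hmt haS
      rw [ht0] at this
      rw [Finset.mem_singleton.1 this]
    have hS1 : 1 ≤ S.card := Finset.card_pos.2 hS
    rcases htight X htc with ⟨v, hv⟩ | ⟨v, hv⟩
    · have h1 : (S ∪ T) = {v} := by
        apply Finset.coe_injective
        rw [← hX, hv]; simp
      have := congrArg Finset.card h1
      rw [hcard_union, Finset.card_singleton] at this
      omega
    · have h1 : ((S ∪ T)ᶜ : Finset G.V) = {v} := by
        apply Finset.coe_injective
        rw [Finset.coe_compl, ← hX, hv]; simp
      have := congrArg Finset.card h1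
      rw [Finset.card_compl, hcard_union, Finset.card_singleton] at this
      omega

/-- Given two perfect matchings, one containing `e` and one avoiding it, the two
ends of `e` are joined in `G - e`. -/
lemma reach_of_two_pm {M M' : Set G.E} (hM : G.IsPerfectMatching M)
    (hM' : G.IsPerfectMatching M')
    {c : G.V → Bool} (hc : ∀ (e : G.E) (a b : G.V), G.ends e = s(a, b) → c a ≠ c b)
    {e : G.E} (he : e ∈ M') (heM : e ∉ M) {u v : G.V} (hends : G.ends e = s(u, v)) :
    Relation.ReflTransGen (G.deleteEdge e).Adj v u := by
  classical
  have hm'v : mf hM' v = u := mf_eq_of_mem hM' he (hends.trans Sym2.eq_swap)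
  have hm'u : mf hM' u = v := mf_eq_of_mem hM' he hends
  set σ : Equiv.Perm G.V :=
    (Function.Involutive.toPerm _ (fun x => mf_invol hM x)).trans
      (Function.Involutive.toPerm _ (fun x => mf_invol hM' x)) with hσdef
  have hσ : ∀ y, σ y = mf hM' (mf hM y) := fun y => rfl
  have hord : ∃ n, 0 < n ∧ (σ ^ n) v = v :=
    ⟨orderOf σ, orderOf_pos σ, by rw [pow_orderOf_eq_one]; rfl⟩
  set t := Nat.find hord with htdef
  obtain ⟨htpos, htv⟩ : 0 < t ∧ (σ ^ t) v = v := Nat.find_spec hord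
  have hmin : ∀ i, 0 < i → i < t → (σ ^ i) v ≠ v :=
    fun i h1 h2 h3 => Nat.find_min hord h2 ⟨h1, h3⟩
  set D : G.V → G.V → Prop := fun x y => (G.deleteEdge e).Adj x y with hD
  have step_M : ∀ x, D x (mf hM x) := by
    intro x
    exact ⟨(mf_ne hM x).symm,
      ⟨edf hM x, fun hEq => heM (hEq ▸ edf_mem hM x)⟩, mf_spec hM x⟩
  have step_M' : ∀ x, x ≠ u → x ≠ v → D x (mf hM' x) := by
    intro x hxu hxv
    refine ⟨(mf_ne hM' x).symm, ⟨edf hM' x, fun hEq => ?_⟩, mf_spec hM' x⟩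
    have h2 : G.ends e = s(x, mf hM' x) := hEq ▸ mf_spec hM' x
    rw [hends, Sym2.eq_iff] at h2
    rcases h2 with ⟨h3, _⟩ | ⟨_, h3⟩
    · exact hxu h3.symm
    · exact hxv h3.symm
  have hcol : ∀ i, c ((σ ^ i) v) = c v := by
    intro i
    induction i with
    | zero => rfl
    | succ i ih =>
      rw [pow_succ', Equiv.Perm.mul_apply, hσ]
      exact bool3 _ _ _ (mf_color hc hM' _) ((mf_color hc hM _).trans_eq ih)
  have main : ∀ i, i < t → Relation.ReflTransGen D v ((σ ^ i) v) := by
    intro i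
    induction i with
    | zero => intro _; rw [pow_zero]; exact Relation.ReflTransGen.refl
    | succ i ih =>
      intro hi
      have h1 := ih (Nat.lt_of_succ_lt hi)
      have hxv : mf hM ((σ ^ i) v) ≠ v := by
        intro h
        have h2 := mf_color hc hM ((σ ^ i) v)
        rw [h, hcol i] at h2
        exact h2 rfl
      have hxu : mf hM ((σ ^ i) v) ≠ u := by
        intro h
        apply hmin (i + 1) (Nat.succ_pos i) hi
        rw [pow_succ', Equiv.Perm.mul_apply, hσ, h, hm'u]
      have hstep2 : D (mf hM ((σ ^ i) v)) ((σ ^ (i + 1)) v) := by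
        rw [pow_succ', Equiv.Perm.mul_apply, hσ]
        exact step_M' _ hxu hxv
      exact (h1.tail (step_M _)).tail hstep2
  have hlast : mf hM ((σ ^ (t - 1)) v) = u := by
    have h2 : σ ((σ ^ (t - 1)) v) = v := by
      rw [← Equiv.Perm.mul_apply, ← pow_succ', Nat.sub_add_cancel htpos]
      exact htv
    have h3 := congrArg (mf hM') h2
    rw [hσ, mf_invol hM'] at h3
    rw [h3, hm'v]
  have := (main (t - 1) (by omega)).tail (step_M ((σ ^ (t - 1)) v))
  rwa [hlast] at this

end BraceProof


open BraceProof Finset in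
/-- In a brace on six or more vertices, every edge is removable. -/
theorem brace_every_edge_removable
    (G : Multigraph) (hG : G.IsBrace) (h6 : 6 ≤ Nat.card G.V) (e : G.E) :
    G.Removable e := by
  classical
  obtain ⟨hmc, ⟨c, hc⟩, htight⟩ := hG
  obtain ⟨u, v, hends⟩ := Multigraph.Sym2.exists_eq_mk (G.ends e)
  have hcuv : c u ≠ c v := hc e u v hends
  have huv : u ≠ v := fun h => hcuv (h ▸ rfl)
  obtain ⟨M₀, hM₀, heM₀⟩ := hmc.2.2 e
  have h6' : 6 ≤ Fintype.card G.V := by rwa [← Nat.card_eq_fintype_card]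
  have hAcard : ∀ β, 2 * (univ.filter fun z => c z = β).card = Fintype.card G.V :=
    fun β => two_mul_color_class hc hM₀ β
  -- minimum degree at least 3
  have hdeg : ∀ x : G.V, 3 ≤ (univ.filter (fun b => G.Adj x b)).card := by
    intro x
    have hk := key_nbhd hmc htight c hc hM₀ {x} ⟨x, Finset.mem_singleton_self x⟩
      (c x) (by simp) (by simp; omega)
    have hfe : (univ.filter fun b => ∃ a ∈ ({x} : Finset G.V), G.Adj a b) =
        univ.filter (fun b => G.Adj x b) := by
      apply Finset.filter_congr
      intro b _
      simp
    rw [hfe] at hk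
    simpa using hk
  -- the central claim
  have central1 : ∀ (f : G.E) (x y : G.V), f ≠ e → G.ends f = s(x, y) →
      c x = c u → c y = c v → ∃ M, G.IsPerfectMatching M ∧ f ∈ M ∧ e ∉ M := by
    intro f x y hfe hf hcx hcy
    by_cases hxu : x = u
    · -- f is incident with u, so any perfect matching containing f avoids e
      obtain ⟨M, hM, hfM⟩ := hmc.2.2 f
      refine ⟨M, hM, hfM, fun heM => ?_⟩
      have h1 : e = edf hM u := edf_uniq hM heM (by rw [hends]; simp)
      have h2 : f = edf hM u := edf_uniq hM hfM (by rw [hf, hxu]; simp)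
      exact hfe (h2.trans h1.symm)
    by_cases hyv : y = v
    · obtain ⟨M, hM, hfM⟩ := hmc.2.2 f
      refine ⟨M, hM, hfM, fun heM => ?_⟩
      have h1 : e = edf hM v := edf_uniq hM heM (by rw [hends]; simp)
      have h2 : f = edf hM v := edf_uniq hM hfM (by rw [hf, hyv]; simp)
      exact hfe (h2.trans h1.symm)
    -- main case: f disjoint from e
    have hw : ∃ w, G.Adj u w ∧ w ≠ v ∧ w ≠ y := by
      by_contra hcon
      push_neg at hcon
      have hsub : (univ.filter (fun b => G.Adj u b)) ⊆ {v, y} := by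
        intro b hb
        rw [Finset.mem_filter] at hb
        by_cases hbv : b = v
        · simp [hbv]
        · simp [hcon b hb.2 hbv]
      have h1 := Finset.card_le_card hsub
      have h2 : ({v, y} : Finset G.V).card ≤ 2 :=
        le_trans (Finset.card_insert_le _ _) (by simp)
      have := hdeg u
      omega
    obtain ⟨w, hadj_uw, hwv, hwy⟩ := hw
    obtain ⟨g₀, hg₀⟩ := hadj_uw.2
    have hcw : c w = c v := bool3' _ _ _ (adj_color hc hadj_uw) hcuv
    have hcxy : c x ≠ c y := hc f x y hf
    set F : Finset G.V := univ.filter (fun z => c z = c u) with hF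
    set F' : Finset G.V := univ.filter (fun z => c z = c v) with hF'
    have hxF : x ∈ F := by rw [hF, Finset.mem_filter]; exact ⟨Finset.mem_univ _, hcx⟩
    have huF : u ∈ F := by rw [hF, Finset.mem_filter]; simp
    have hyF' : y ∈ F' := by rw [hF', Finset.mem_filter]; exact ⟨Finset.mem_univ _, hcy⟩
    have hwF' : w ∈ F' := by rw [hF', Finset.mem_filter]; exact ⟨Finset.mem_univ _, hcw⟩
    have hFF' : F.card = F'.card := by
      have h1 := hAcard (c u)
      have h2 := hAcard (c v)
      rw [← hF] at h1
      rw [← hF'] at h2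
      omega
    have hF2 : 2 ≤ F.card := by
      have : ({x, u} : Finset G.V) ⊆ F := by
        intro z hz
        rcases Finset.mem_insert.1 hz with rfl | hz
        · exact hxF
        · rw [Finset.mem_singleton.1 hz]; exact huF
      have h1 := Finset.card_le_card this
      rw [Finset.card_insert_of_notMem (by simp [hxu]), Finset.card_singleton] at h1
      omega
    set A' : Finset G.V := (F.erase x).erase u with hA'
    have hA'card : A'.card = F.card - 2 := by
      rw [hA', Finset.card_erase_of_mem (Finset.mem_erase.2 ⟨fun h => hxu h.symm, huF⟩),
        Finset.card_erase_of_mem hxF]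
      omega
    have hA'mem : ∀ a ∈ A', c a = c u ∧ a ≠ x ∧ a ≠ u := by
      intro a ha
      rw [hA', Finset.mem_erase, Finset.mem_erase, hF, Finset.mem_filter] at ha
      exact ⟨ha.2.2.2, ha.2.1, ha.1⟩
    set r : {a : G.V // a ∈ A'} → Finset G.V :=
      fun a => univ.filter (fun b => b ≠ y ∧ b ≠ w ∧ G.Adj a.1 b) with hr
    have hall : ∀ s : Finset {a : G.V // a ∈ A'}, s.card ≤ (s.biUnion r).card := by
      intro s
      rcases s.eq_empty_or_nonempty with rfl | hs
      · simp
      set S : Finset G.V := s.image (fun a => a.1) with hS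
      have hScard : S.card = s.card :=
        Finset.card_image_of_injective s Subtype.val_injective
      have hSmono : ∀ a ∈ S, c a = c u := by
        intro a ha
        obtain ⟨a', _, rfl⟩ := Finset.mem_image.1 ha
        exact (hA'mem a'.1 a'.2).1
      have hSne : S.Nonempty := hs.image _
      have hSA : S.card ≤ F.card - 2 := by
        rw [← hA'card]
        apply Finset.card_le_card
        intro a ha
        obtain ⟨a', _, rfl⟩ := Finset.mem_image.1 ha
        exact a'.2
      have hsize : 2 * S.card + 3 ≤ Fintype.card G.V := by
        have h1 := hAcard (c u)
        rw [← hF] at h1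
        omega
      have hkey := key_nbhd hmc htight c hc hM₀ S hSne (c u) hSmono hsize
      have hsub : (univ.filter (fun b => ∃ a ∈ S, G.Adj a b)) ⊆
          (s.biUnion r) ∪ {y, w} := by
        intro b hb
        rw [Finset.mem_filter] at hb
        obtain ⟨-, a, haS, hab⟩ := hb
        by_cases hby : b = y
        · apply Finset.mem_union_right; simp [hby]
        by_cases hbw : b = w
        · apply Finset.mem_union_right; simp [hbw]
        apply Finset.mem_union_left
        obtain ⟨a', ha's, rfl⟩ := Finset.mem_image.1 haS
        exact Finset.mem_biUnion.2 ⟨a', ha's,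
          Finset.mem_filter.2 ⟨Finset.mem_univ _, hby, hbw, hab⟩⟩
      have h1 := Finset.card_le_card hsub
      have h2 := Finset.card_union_le (s.biUnion r) ({y, w} : Finset G.V)
      have h3 : ({y, w} : Finset G.V).card ≤ 2 :=
        le_trans (Finset.card_insert_le _ _) (by simp)
      omega
    obtain ⟨φ, hφinj, hφmem⟩ := (Finset.all_card_le_biUnion_card_iff_exists_injective r).1 hall
    have hφy : ∀ a, φ a ≠ y ∧ φ a ≠ w ∧ G.Adj a.1 (φ a) := by
      intro a
      have := hφmem a
      rw [hr, Finset.mem_filter] at this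
      exact this.2
    have hφc : ∀ a, c (φ a) = c v := by
      intro a
      have h1 : c a.1 ≠ c (φ a) := adj_color hc (hφy a).2.2
      rw [(hA'mem a.1 a.2).1] at h1
      exact bool3' _ _ _ h1 hcuv
    set B' : Finset G.V := (F'.erase y).erase w with hB'
    have hB'card : B'.card = F'.card - 2 := by
      rw [hB', Finset.card_erase_of_mem (Finset.mem_erase.2 ⟨fun h => hwy h, hwF'⟩),
        Finset.card_erase_of_mem hyF']
      omega
    have himage : Finset.univ.image φ = B' := by
      apply Finset.eq_of_subset_of_card_le
      · intro b hb
        obtain ⟨a, -, rfl⟩ := Finset.mem_image.1 hb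
        rw [hB', Finset.mem_erase, Finset.mem_erase, hF', Finset.mem_filter]
        exact ⟨(hφy a).2.1, (hφy a).1, Finset.mem_univ _, hφc a⟩
      · rw [Finset.card_image_of_injective _ hφinj, Finset.card_univ, Fintype.card_coe,
          hB'card, hA'card]
        omega
    have hedge : ∀ a : {a : G.V // a ∈ A'}, ∃ g : G.E, G.ends g = s(a.1, φ a) :=
      fun a => (hφy a).2.2.2
    choose ed hed using hedge
    set M : Set G.E := insert f (insert g₀ (Set.range ed)) with hMdef
    have hmemM : ∀ g : G.E, g ∈ M ↔ g = f ∨ g = g₀ ∨ ∃ a, ed a = g := by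
      intro g
      rw [hMdef]
      simp [Set.mem_insert_iff]
    -- basic distinctness facts via colors
    have hxv : x ≠ v := fun h => hcuv (hcx ▸ h ▸ rfl)
    have hyu : y ≠ u := fun h => hcuv ((h ▸ hcy : c u = c v) ▸ rfl)
    have hwu : w ≠ u := fun h => hcuv ((h ▸ hcw : c u = c v) ▸ rfl)
    have hxw : x ≠ w := fun h => hcuv (hcx ▸ (h ▸ hcw : c x = c v) ▸ rfl)
    have hxy' : x ≠ y := fun h => hcxy (h ▸ rfl)
    have hPM : G.IsPerfectMatching M := by
      intro z
      by_cases hom : c z = c u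
      · by_cases hzx : z = x
        · refine ⟨f, ⟨(hmemM f).2 (Or.inl rfl), (inc_iff hf).2 (Or.inl hzx)⟩, ?_⟩
          rintro g' ⟨hg'M, hg'inc⟩
          rcases (hmemM g').1 hg'M with rfl | rfl | ⟨a, rfl⟩
          · rfl
          · exfalso
            rw [hzx] at hg'inc
            rcases Sym2.mem_iff.1 (hg₀ ▸ hg'inc : x ∈ s(u, w)) with h | h
            · exact hxu h
            · exact hxw h
          · exfalso
            rw [hzx] at hg'inc
            rcases Sym2.mem_iff.1 (hed a ▸ hg'inc : x ∈ s(a.1, φ a)) with h | h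
            · exact (hA'mem a.1 a.2).2.1 h.symm
            · exact hcuv (hcx.symm.trans (h ▸ hφc a : c x = c v))
        · by_cases hzu : z = u
          · refine ⟨g₀, ⟨(hmemM g₀).2 (Or.inr (Or.inl rfl)),
              (inc_iff hg₀).2 (Or.inl hzu)⟩, ?_⟩
            rintro g' ⟨hg'M, hg'inc⟩
            rcases (hmemM g').1 hg'M with rfl | rfl | ⟨a, rfl⟩
            · exfalso
              rw [hzu] at hg'inc
              rcases Sym2.mem_iff.1 (hf ▸ hg'inc : u ∈ s(x, y)) with h | h
              · exact hxu h.symm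
              · exact hyu h.symm
            · rfl
            · exfalso
              rw [hzu] at hg'inc
              rcases Sym2.mem_iff.1 (hed a ▸ hg'inc : u ∈ s(a.1, φ a)) with h | h
              · exact (hA'mem a.1 a.2).2.2 h.symm
              · exact hcuv ((h ▸ hφc a : c u = c v) ▸ rfl)
          · have hzA : z ∈ A' := by
              rw [hA', Finset.mem_erase, Finset.mem_erase, hF, Finset.mem_filter]
              exact ⟨hzu, hzx, Finset.mem_univ _, hom⟩
            refine ⟨ed ⟨z, hzA⟩, ⟨(hmemM _).2 (Or.inr (Or.inr ⟨_, rfl⟩)),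
              (inc_iff (hed ⟨z, hzA⟩)).2 (Or.inl rfl)⟩, ?_⟩
            rintro g' ⟨hg'M, hg'inc⟩
            rcases (hmemM g').1 hg'M with rfl | rfl | ⟨a, rfl⟩
            · exfalso
              rcases Sym2.mem_iff.1 (hf ▸ hg'inc : z ∈ s(x, y)) with h | h
              · exact hzx h
              · exact hcuv (hom ▸ (h ▸ hcy : c z = c v) ▸ rfl)
            · exfalso
              rcases Sym2.mem_iff.1 (hg₀ ▸ hg'inc : z ∈ s(u, w)) with h | h
              · exact hzu h
              · exact hcuv (hom ▸ (h ▸ hcw : c z = c v) ▸ rfl)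
            · rcases Sym2.mem_iff.1 (hed a ▸ hg'inc : z ∈ s(a.1, φ a)) with h | h
              · have : a = ⟨z, hzA⟩ := Subtype.ext h.symm
                rw [this]
              · exact absurd (hom ▸ (h ▸ hφc a : c z = c v) ▸ rfl) hcuv
      · -- c z = c v side
        have hom' : c z = c v := bool3 _ _ _ hom hcuv
        by_cases hzy : z = y
        · refine ⟨f, ⟨(hmemM f).2 (Or.inl rfl), (inc_iff hf).2 (Or.inr hzy)⟩, ?_⟩
          rintro g' ⟨hg'M, hg'inc⟩
          rcases (hmemM g').1 hg'M with rfl | rfl | ⟨a, rfl⟩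
          · rfl
          · exfalso
            rw [hzy] at hg'inc
            rcases Sym2.mem_iff.1 (hg₀ ▸ hg'inc : y ∈ s(u, w)) with h | h
            · exact hyu h
            · exact hwy h.symm
          · exfalso
            rw [hzy] at hg'inc
            rcases Sym2.mem_iff.1 (hed a ▸ hg'inc : y ∈ s(a.1, φ a)) with h | h
            · exact hcuv ((hA'mem a.1 a.2).1 ▸ (h ▸ hcy : c a.1 = c v) ▸ rfl)
            · exact (hφy a).1 h.symm
        · by_cases hzw : z = w
          · refine ⟨g₀, ⟨(hmemM g₀).2 (Or.inr (Or.inl rfl)),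
              (inc_iff hg₀).2 (Or.inr hzw)⟩, ?_⟩
            rintro g' ⟨hg'M, hg'inc⟩
            rcases (hmemM g').1 hg'M with rfl | rfl | ⟨a, rfl⟩
            · exfalso
              rw [hzw] at hg'inc
              rcases Sym2.mem_iff.1 (hf ▸ hg'inc : w ∈ s(x, y)) with h | h
              · exact hxw h.symm
              · exact hwy h
            · rfl
            · exfalso
              rw [hzw] at hg'inc
              rcases Sym2.mem_iff.1 (hed a ▸ hg'inc : w ∈ s(a.1, φ a)) with h | h
              · exact hcuv ((hA'mem a.1 a.2).1 ▸ (h ▸ hcw : c a.1 = c v) ▸ rfl)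
              · exact (hφy a).2.1 h.symm
          · have hzB : z ∈ B' := by
              rw [hB', Finset.mem_erase, Finset.mem_erase, hF', Finset.mem_filter]
              exact ⟨hzw, hzy, Finset.mem_univ _, hom'⟩
            rw [← himage] at hzB
            obtain ⟨a₀, -, ha₀⟩ := Finset.mem_image.1 hzB
            refine ⟨ed a₀, ⟨(hmemM _).2 (Or.inr (Or.inr ⟨_, rfl⟩)),
              (inc_iff (hed a₀)).2 (Or.inr ha₀.symm)⟩, ?_⟩
            rintro g' ⟨hg'M, hg'inc⟩
            rcases (hmemM g').1 hg'M with rfl | rfl | ⟨a, rfl⟩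
            · exfalso
              rcases Sym2.mem_iff.1 (hf ▸ hg'inc : z ∈ s(x, y)) with h | h
              · exact hcuv ((h ▸ hom' : c x = c v) ▸ hcx ▸ rfl)
              · exact hzy h
            · exfalso
              rcases Sym2.mem_iff.1 (hg₀ ▸ hg'inc : z ∈ s(u, w)) with h | h
              · exact hcuv ((h ▸ hom' : c u = c v))
              · exact hzw h
            · rcases Sym2.mem_iff.1 (hed a ▸ hg'inc : z ∈ s(a.1, φ a)) with h | h
              · exact absurd ((hA'mem a.1 a.2).1 ▸ (h ▸ hom' : c a.1 = c v)) hcuv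
              · have h5 : φ a = φ a₀ := by rw [ha₀]; exact h.symm
                rw [hφinj h5]
    have hfM : f ∈ M := (hmemM f).2 (Or.inl rfl)
    have heM : e ∉ M := by
      intro h
      rcases (hmemM e).1 h with rfl | rfl | ⟨a, rfl⟩
      · exact hfe rfl
      · rw [hg₀] at hends
        rcases Sym2.eq_iff.1 hends with ⟨-, h2⟩ | ⟨-, h2⟩
        · exact hwv h2
        · exact hwu h2
      · rw [hed a] at hends
        rcases Sym2.eq_iff.1 hends with ⟨h1, -⟩ | ⟨h1, -⟩
        · exact (hA'mem a.1 a.2).2.2 h1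
        · exact hcuv (by rw [← (hA'mem a.1 a.2).1, h1])
    exact ⟨M, hPM, hfM, heM⟩
  have central : ∀ f : G.E, f ≠ e → ∃ M, G.IsPerfectMatching M ∧ f ∈ M ∧ e ∉ M := by
    intro f hfe
    obtain ⟨x, y, hf⟩ := Multigraph.Sym2.exists_eq_mk (G.ends f)
    rcases bool4 (c x) (c y) (c u) (c v) (hc f x y hf) hcuv with ⟨h1, h2⟩ | ⟨h1, h2⟩
    · exact central1 f x y hfe hf h1 h2
    · exact central1 f y x hfe (hf.trans Sym2.eq_swap) h2 h1
  -- a perfect matching avoiding e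
  have hMavoid : ∃ M, G.IsPerfectMatching M ∧ e ∉ M := by
    have h3 := hdeg u
    have hw : ∃ w, G.Adj u w ∧ w ≠ v := by
      by_contra hcon
      push_neg at hcon
      have hsub : (univ.filter (fun b => G.Adj u b)) ⊆ {v} := by
        intro b hb
        rw [Finset.mem_filter] at hb
        simp [hcon b hb.2]
      have h1 := Finset.card_le_card hsub
      rw [Finset.card_singleton] at h1
      omega
    obtain ⟨w, hadj, hwv⟩ := hw
    obtain ⟨g₀, hg₀⟩ := hadj.2
    have hg₀e : g₀ ≠ e := by
      intro h
      rw [h, hends] at hg₀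
      rcases Sym2.eq_iff.1 hg₀ with ⟨-, h2⟩ | ⟨h1, -⟩
      · exact hwv h2.symm
      · exact hadj.1 h1
    obtain ⟨M, hM, -, heM⟩ := central g₀ hg₀e
    exact ⟨M, hM, heM⟩
  obtain ⟨Ma, hMa, heMa⟩ := hMavoid
  -- assemble
  refine ⟨le_trans (by norm_num) h6, ⟨?_, ?_⟩, ?_⟩
  · have : 0 < Nat.card G.V := by omega
    exact (Nat.card_pos_iff.mp this).1
  · -- connectivity of G - e
    have hvu : Relation.ReflTransGen (G.deleteEdge e).Adj v u :=
      reach_of_two_pm hMa hM₀ hc heM₀ heMa hends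
    have hsym : Symmetric (G.deleteEdge e).Adj := fun a b h => adj_symm h
    have huv' : Relation.ReflTransGen (G.deleteEdge e).Adj u v :=
      by haveI : Std.Symm (G.deleteEdge e).Adj := ⟨fun a b h => hsym h⟩; exact (Relation.ReflTransGen.symmetric (r := (G.deleteEdge e).Adj)).symm _ _ hvu
    intro p q
    have hpq := hmc.2.1.2 p q
    induction hpq with
    | refl => exact Relation.ReflTransGen.refl
    | tail hr step ih =>
      rename_i a b
      refine Relation.ReflTransGen.trans ih ?_
      obtain ⟨hne, g, hg⟩ := step
      by_cases hge : g = e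
      · rw [hge, hends] at hg
        rcases Sym2.eq_iff.1 hg with ⟨h1, h2⟩ | ⟨h1, h2⟩
        · rw [h1, h2] at huv'; exact huv'
        · rw [h2, h1] at hvu; exact hvu
      · exact Relation.ReflTransGen.single ⟨hne, ⟨g, hge⟩, hg⟩
  · -- every edge of G - e is in a perfect matching of G - e
    rintro ⟨f, hfe⟩
    obtain ⟨M, hM, hfM, heM⟩ := central f hfe
    refine ⟨{h : (G.deleteEdge e).E | h.1 ∈ M}, ?_, hfM⟩
    intro z
    obtain ⟨g, ⟨hgM, hginc⟩, hguniq⟩ := hM z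
    refine ⟨⟨g, fun h => heM (h ▸ hgM)⟩, ⟨hgM, hginc⟩, ?_⟩
    rintro ⟨g', hg'e⟩ ⟨hg'M, hg'inc⟩
    exact Subtype.ext (hguniq g' ⟨hg'M, hg'inc⟩)
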